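/- Fix δ ∈ (0,1) and C > 0, and let g : (0,δ] → ℂ be differentiable with |g(t)| ≤ C·(log(e/t))² and |g'(t)| ≤ C·log(e/t)/t for all t ∈ (0,δ]. Then there exists M > 0 such that for all real y with y ≥ max(e, 1/δ): |∫₀^δ g(t)·e^{iyt} dt| ≤ M·(log y)²/y. -/

import Mathlib

open MeasureTheory Set

lemma aux_log_sq_le (t : ℝ) (ht : 0 < t) (ht1 : t ≤ 1) :
    (Real.log (Real.exp 1 / t)) ^ 2 ≤ 16 * Real.exp 1 ^ ((1:ℝ)/2) * t ^ (-((1:ℝ)/2)) := by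
  have hx : (0:ℝ) < Real.exp 1 / t := div_pos (Real.exp_pos 1) ht
  have h1 : Real.log (Real.exp 1 / t) ≤ 4 * (Real.exp 1 / t) ^ ((1:ℝ)/4) := by
    have h := Real.log_le_rpow_div hx.le (by norm_num : (0:ℝ) < 1/4)
    have : (Real.exp 1 / t) ^ ((1:ℝ)/4) / (1/4) = 4 * (Real.exp 1 / t) ^ ((1:ℝ)/4) := by ring
    linarith [this ▸ h]
  have h0 : 0 ≤ Real.log (Real.exp 1 / t) := by
    apply Real.log_nonneg
    rw [le_div_iff₀ ht]
    have h2 : (1:ℝ) < Real.exp 1 := by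
      have := Real.exp_one_gt_d9; linarith
    nlinarith
  calc (Real.log (Real.exp 1 / t)) ^ 2
      ≤ (4 * (Real.exp 1 / t) ^ ((1:ℝ)/4)) ^ 2 := by
        apply pow_le_pow_left₀ h0 h1
    _ = 16 * ((Real.exp 1 / t) ^ ((1:ℝ)/4)) ^ 2 := by ring
    _ = 16 * (Real.exp 1 / t) ^ ((1:ℝ)/2) := by
        rw [← Real.rpow_natCast ((Real.exp 1 / t) ^ ((1:ℝ)/4)) 2, ← Real.rpow_mul hx.le]
        norm_num
    _ = 16 * Real.exp 1 ^ ((1:ℝ)/2) * t ^ (-((1:ℝ)/2)) := by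
        rw [Real.div_rpow (Real.exp_pos 1).le ht.le, Real.rpow_neg ht.le]
        ring

set_option maxHeartbeats 1000000 in
theorem stmt14 (δ : ℝ) (hδ1 : 0 < δ) (hδ2 : δ < 1) (C : ℝ) (hC : 0 < C)
    (g g' : ℝ → ℂ)
    (hderiv : ∀ t ∈ Ioc (0 : ℝ) δ, HasDerivWithinAt g (g' t) (Ioc (0 : ℝ) δ) t)
    (hg : ∀ t ∈ Ioc (0 : ℝ) δ,
      ‖g t‖ ≤ C * (Real.log (Real.exp 1 / t)) ^ 2)
    (hg' : ∀ t ∈ Ioc (0 : ℝ) δ,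
      ‖g' t‖ ≤ C * Real.log (Real.exp 1 / t) / t) :
    ∃ M : ℝ, 0 < M ∧ ∀ y : ℝ, max (Real.exp 1) (1 / δ) ≤ y →
      ‖∫ t in Ioc (0 : ℝ) δ, g t * Complex.exp (Complex.I * y * t)‖ ≤
        M * (Real.log y) ^ 2 / y := by
  have he1 : (1:ℝ) < Real.exp 1 := by have := Real.exp_one_gt_d9; linarith
  have hK2 : Real.exp 1 ^ ((1:ℝ)/2) ≤ 2 := by
    have he4 : Real.exp 1 ≤ 4 := by have := Real.exp_one_lt_d9; linarith
    calc Real.exp 1 ^ ((1:ℝ)/2) ≤ (4:ℝ) ^ ((1:ℝ)/2) :=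
          Real.rpow_le_rpow (Real.exp_pos 1).le he4 (by norm_num)
      _ = 2 := by
          rw [show (4:ℝ) = 2^(2:ℕ) by norm_num, ← Real.rpow_natCast 2 2,
            ← Real.rpow_mul (by norm_num)]
          norm_num
  have hgc : ContinuousOn g (Ioc (0:ℝ) δ) := fun t ht => (hderiv t ht).continuousWithinAt
  refine ⟨100 * C, by positivity, ?_⟩
  intro y hy
  have hye : Real.exp 1 ≤ y := le_trans (le_max_left _ _) hy
  have hyδ : 1 / δ ≤ y := le_trans (le_max_right _ _) hy
  have hy1 : 1 < y := lt_of_lt_of_le he1 hye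
  have hy0 : 0 < y := lt_trans one_pos hy1
  set L := Real.log y with hL
  have hL1 : 1 ≤ L := by
    rw [hL, ← Real.log_exp 1]
    exact Real.log_le_log (Real.exp_pos 1) hye
  set ε := y ^ (-2 : ℝ) with hε
  have hε0 : 0 < ε := Real.rpow_pos_of_pos hy0 _
  have hεδ : ε ≤ δ := by
    have h1 : ε ≤ y ^ (-1 : ℝ) :=
      Real.rpow_le_rpow_of_exponent_le hy1.le (by norm_num)
    have h2 : y ^ (-1 : ℝ) = y⁻¹ := Real.rpow_neg_one y
    have h3 : y⁻¹ ≤ δ := by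
      rw [inv_le_comm₀ hy0 hδ1]
      linarith [(one_div δ) ▸ hyδ]
    linarith [h2 ▸ h1]
  have hlogε : Real.log ε = -2 * L := by
    rw [hε, Real.log_rpow hy0]
  have hloge : Real.log (Real.exp 1 / ε) = 1 + 2 * L := by
    rw [Real.log_div (Real.exp_ne_zero 1) hε0.ne', Real.log_exp, hlogε]; ring
  have h3L : Real.log (Real.exp 1 / ε) ≤ 3 * L := by rw [hloge]; linarith

  -- the oscillation factor
  set E : ℝ → ℂ := fun t => Complex.exp (Complex.I * y * t) with hE
  have hEc : Continuous E := by
    rw [hE]; exact Complex.continuous_exp.comp (continuous_const.mul Complex.continuous_ofReal)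
  have hEabs : ∀ t : ℝ, ‖E t‖ = 1 := by
    intro t
    rw [hE]
    simp [Complex.norm_exp, Complex.mul_re, Complex.mul_im]
  -- integrability of the integrand on (0, δ]
  have hmaj : IntegrableOn (fun t : ℝ => C * (16 * Real.exp 1 ^ ((1:ℝ)/2)) * t ^ (-((1:ℝ)/2)))
      (Ioc (0:ℝ) δ) := by
    have h1 := (intervalIntegral.intervalIntegrable_rpow' (a := 0) (b := δ) (by norm_num : (-1:ℝ) < -(1/2)))
    rw [intervalIntegrable_iff_integrableOn_Ioc_of_le hδ1.le] at h1
    exact h1.const_mul _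
  have hφm : AEStronglyMeasurable (fun t => g t * E t) (volume.restrict (Ioc (0:ℝ) δ)) :=
    (hgc.mul hEc.continuousOn).aestronglyMeasurable measurableSet_Ioc
  have hφbound : ∀ t ∈ Ioc (0:ℝ) δ,
      ‖g t * E t‖ ≤ C * (16 * Real.exp 1 ^ ((1:ℝ)/2)) * t ^ (-((1:ℝ)/2)) := by
    intro t ht
    rw [norm_mul, hEabs, mul_one]
    calc ‖g t‖ ≤ C * (Real.log (Real.exp 1 / t)) ^ 2 := hg t ht
      _ ≤ C * (16 * Real.exp 1 ^ ((1:ℝ)/2) * t ^ (-((1:ℝ)/2))) :=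
          mul_le_mul_of_nonneg_left (aux_log_sq_le t ht.1 (le_trans ht.2 hδ2.le)) hC.le
      _ = C * (16 * Real.exp 1 ^ ((1:ℝ)/2)) * t ^ (-((1:ℝ)/2)) := by ring
  have hφint : IntegrableOn (fun t => g t * E t) (Ioc (0:ℝ) δ) := by
    apply Integrable.mono' hmaj hφm
    exact (ae_restrict_iff' measurableSet_Ioc).2 (Filter.Eventually.of_forall hφbound)
  -- split the integral at ε
  have hsplit : (∫ t in Ioc (0:ℝ) δ, g t * E t)
      = (∫ t in Ioc (0:ℝ) ε, g t * E t) + ∫ t in Ioc ε δ, g t * E t := by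
    rw [← Ioc_union_Ioc_eq_Ioc hε0.le hεδ,
      setIntegral_union (Ioc_disjoint_Ioc_of_le le_rfl) measurableSet_Ioc
        (hφint.mono_set (Ioc_subset_Ioc_right hεδ))
        (hφint.mono_set (Ioc_subset_Ioc_left hε0.le))]
  -- head bound
  have hεhalf : ε ^ ((1:ℝ)/2) = y⁻¹ := by
    rw [hε, ← Real.rpow_mul hy0.le]
    rw [show ((-2) * ((1:ℝ)/2)) = -1 by norm_num, Real.rpow_neg_one]
  have hhead : ‖∫ t in Ioc (0:ℝ) ε, g t * E t‖ ≤ 64 * C / y := by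
    have hb := norm_integral_le_of_norm_le (hmaj.mono_set (Ioc_subset_Ioc_right hεδ))
      ((ae_restrict_iff' measurableSet_Ioc).2 (Filter.Eventually.of_forall
        (fun t ht => hφbound t ⟨ht.1, le_trans ht.2 hεδ⟩)))
    refine le_trans hb ?_
    have hval : (∫ t in Ioc (0:ℝ) ε, C * (16 * Real.exp 1 ^ ((1:ℝ)/2)) * t ^ (-((1:ℝ)/2)))
        = C * (16 * Real.exp 1 ^ ((1:ℝ)/2)) * (2 * y⁻¹) := by
      rw [MeasureTheory.integral_const_mul]
      congr 1
      rw [← intervalIntegral.integral_of_le hε0.le,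
        integral_rpow (Or.inl (by norm_num : (-1:ℝ) < -(1/2)))]
      rw [Real.zero_rpow (by norm_num : (-((1:ℝ)/2) + 1) ≠ 0)]
      rw [show (-((1:ℝ)/2) + 1) = (1:ℝ)/2 by norm_num, hεhalf]
      ring
    rw [hval, div_eq_mul_inv]
    calc C * (16 * Real.exp 1 ^ ((1:ℝ)/2)) * (2 * y⁻¹)
        = 32 * C * y⁻¹ * Real.exp 1 ^ ((1:ℝ)/2) := by ring
      _ ≤ 32 * C * y⁻¹ * 2 := mul_le_mul_of_nonneg_left hK2 (by positivity)
      _ = 64 * C * y⁻¹ := by ring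
  -- setup for integration by parts on [ε, δ]
  set h : ℝ → ℂ := fun t => E t / (Complex.I * y) with hh
  have hIy : (Complex.I * (y:ℂ)) ≠ 0 :=
    mul_ne_zero Complex.I_ne_zero (by exact_mod_cast hy0.ne')
  have hIyabs : ‖Complex.I * (y:ℂ)‖ = y := by
    rw [norm_mul, Complex.norm_I, one_mul, Complex.norm_real, Real.norm_eq_abs, abs_of_pos hy0]
  have hhabs : ∀ t, ‖h t‖ = y⁻¹ := by
    intro t
    rw [hh]
    simp only [norm_div, hEabs, hIyabs, one_div]
  have hhc : Continuous h := by rw [hh]; exact hEc.div_const _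
  have hEd : ∀ t : ℝ, HasDerivAt E (Complex.I * y * E t) t := by
    intro t
    have h1 : HasDerivAt (fun s : ℝ => ((s : ℂ))) 1 t := by
      exact Complex.ofRealCLM.hasDerivAt (x := t)
    have h2 := (h1.const_mul (Complex.I * (y:ℂ))).cexp
    simp only [mul_one] at h2
    rw [hE]
    convert h2 using 1
    ring
  have hhd : ∀ t : ℝ, HasDerivAt h (E t) t := by
    intro t
    have h1 := (hEd t).div_const (Complex.I * y)
    have h2 : Complex.I * y * E t / (Complex.I * y) = E t := by
      exact mul_div_cancel_left₀ (E t) hIy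
    rw [hh]
    rw [← h2]
    exact h1
  have hsub : Icc ε δ ⊆ Ioc (0:ℝ) δ := fun t ht => ⟨lt_of_lt_of_le hε0 ht.1, ht.2⟩
  have hFd : ∀ t ∈ Ioo ε δ, HasDerivAt (fun t => g t * h t) (g' t * h t + g t * E t) t := by
    intro t ht
    have htm : t ∈ Ioc (0:ℝ) δ := ⟨lt_trans hε0 ht.1, ht.2.le⟩
    have hnb : Ioc (0:ℝ) δ ∈ nhds t := Ioc_mem_nhds htm.1 ht.2
    exact ((hderiv t htm).hasDerivAt hnb).mul (hhd t)
  -- pointwise bound for g' * h on (ε, δ]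
  have hbound' : ∀ t ∈ Ioc ε δ, ‖g' t * h t‖ ≤ 3 * C * L / y * (1 / t) := by
    intro t ht
    have ht0 : 0 < t := lt_trans hε0 ht.1
    have htm : t ∈ Ioc (0:ℝ) δ := ⟨ht0, ht.2⟩
    rw [norm_mul, hhabs]
    have h1 : Real.log (Real.exp 1 / t) ≤ 3 * L := by
      refine le_trans ?_ h3L
      apply Real.log_le_log (div_pos (Real.exp_pos 1) ht0)
      exact div_le_div_of_nonneg_left (Real.exp_pos 1).le hε0 ht.1.le
    have h2 : ‖g' t‖ ≤ C * (3 * L) / t := by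
      refine le_trans (hg' t htm) ?_
      gcongr
    calc ‖g' t‖ * y⁻¹ ≤ (C * (3 * L) / t) * y⁻¹ :=
        mul_le_mul_of_nonneg_right h2 (by positivity)
      _ = 3 * C * L / y * (1 / t) := by field_simp
  -- a.e. strong measurability of g' * h on (ε, δ]
  have hmeasg'h : AEStronglyMeasurable (fun t => g' t * h t) (volume.restrict (Ioc ε δ)) := by
    have h1 : AEStronglyMeasurable (fun t => deriv g t * h t) (volume.restrict (Ioc ε δ)) :=
      ((measurable_deriv g).aestronglyMeasurable.mul hhc.aestronglyMeasurable).restrict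
    refine h1.congr ?_
    have hne : ∀ᵐ t : ℝ, t ≠ δ := by
      rw [ae_iff]
      convert Real.volume_singleton (a := δ) using 2
      ext t; simp
    filter_upwards [ae_restrict_mem measurableSet_Ioc, ae_restrict_of_ae hne] with t ht htne
    have htm : t ∈ Ioc (0:ℝ) δ := ⟨lt_trans hε0 ht.1, ht.2⟩
    have hda := ((hderiv t htm).hasDerivAt
      (Ioc_mem_nhds htm.1 (lt_of_le_of_ne ht.2 htne))).deriv
    rw [hda]
  -- integrability of g' * h on (ε, δ]
  have hm2 : IntegrableOn (fun t : ℝ => 3 * C * L / y * (1 / t)) (Ioc ε δ) := by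
    apply IntegrableOn.mono_set ?_ Ioc_subset_Icc_self
    apply ContinuousOn.integrableOn_Icc
    exact continuousOn_const.mul (continuousOn_const.div continuousOn_id
      (fun t ht => (lt_of_lt_of_le hε0 ht.1).ne'))
  have hg'hint : IntegrableOn (fun t => g' t * h t) (Ioc ε δ) := by
    apply Integrable.mono' hm2 hmeasg'h
    exact (ae_restrict_iff' measurableSet_Ioc).2 (Filter.Eventually.of_forall hbound')
  have hgEint : IntegrableOn (fun t => g t * E t) (Ioc ε δ) :=
    hφint.mono_set (Ioc_subset_Ioc_left hε0.le)
  -- FTC / integration by parts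
  have hint' : IntervalIntegrable (fun t => g' t * h t + g t * E t) volume ε δ := by
    rw [intervalIntegrable_iff_integrableOn_Ioc_of_le hεδ]
    exact hg'hint.add hgEint
  have hFTC := intervalIntegral.integral_eq_sub_of_hasDeriv_right_of_le hεδ
    ((hgc.mono hsub).mul hhc.continuousOn)
    (fun t ht => (hFd t ht).hasDerivWithinAt) hint'
  have hadd : (∫ t in ε..δ, (g' t * h t + g t * E t))
      = (∫ t in ε..δ, g' t * h t) + ∫ t in ε..δ, g t * E t :=
    intervalIntegral.integral_add
      (by rw [intervalIntegrable_iff_integrableOn_Ioc_of_le hεδ]; exact hg'hint)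
      (by rw [intervalIntegrable_iff_integrableOn_Ioc_of_le hεδ]; exact hgEint)
  simp only [intervalIntegral.integral_of_le hεδ] at hFTC hadd
  have heq : (∫ t in Ioc ε δ, g t * E t)
      = g δ * h δ - g ε * h ε - ∫ t in Ioc ε δ, g' t * h t := by
    rw [hadd] at hFTC
    simp only [Pi.mul_apply] at hFTC
    linear_combination hFTC
  -- boundary bound
  have hbdry : ∀ t ∈ Icc ε δ, ‖g t * h t‖ ≤ 9 * C * L ^ 2 / y := by
    intro t ht
    have ht0 : 0 < t := lt_of_lt_of_le hε0 ht.1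
    have htm : t ∈ Ioc (0:ℝ) δ := ⟨ht0, ht.2⟩
    rw [norm_mul, hhabs]
    have h1 : Real.log (Real.exp 1 / t) ≤ 3 * L := by
      refine le_trans ?_ h3L
      apply Real.log_le_log (div_pos (Real.exp_pos 1) ht0)
      exact div_le_div_of_nonneg_left (Real.exp_pos 1).le hε0 ht.1
    have h0 : 0 ≤ Real.log (Real.exp 1 / t) := by
      apply Real.log_nonneg
      rw [le_div_iff₀ ht0]
      nlinarith [htm.2]
    have h2 : ‖g t‖ ≤ 9 * C * L ^ 2 := by
      refine le_trans (hg t htm) ?_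
      nlinarith [pow_le_pow_left₀ h0 h1 2, hC.le]
    calc ‖g t‖ * y⁻¹ ≤ (9 * C * L ^ 2) * y⁻¹ :=
        mul_le_mul_of_nonneg_right h2 (by positivity)
      _ = 9 * C * L ^ 2 / y := by rw [div_eq_mul_inv]
  -- bound on the integral of g' * h
  have hintone : (∫ t in Ioc ε δ, (1:ℝ) / t) = Real.log δ - Real.log ε := by
    rw [← intervalIntegral.integral_of_le hεδ,
      integral_one_div (by
        rw [Set.uIcc_of_le hεδ]
        exact fun hmem => (lt_irrefl (0:ℝ) (lt_of_lt_of_le hε0 hmem.1)))]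
    exact Real.log_div hδ1.ne' hε0.ne'
  have htailint : ‖∫ t in Ioc ε δ, g' t * h t‖ ≤ 6 * C * L ^ 2 / y := by
    have hb := norm_integral_le_of_norm_le hm2
      ((ae_restrict_iff' measurableSet_Ioc).2 (Filter.Eventually.of_forall hbound'))
    refine le_trans hb ?_
    rw [MeasureTheory.integral_const_mul, hintone, hlogε]
    have hlogδ : Real.log δ ≤ 0 := Real.log_nonpos hδ1.le hδ2.le
    have h4 : Real.log δ - (-2 * L) ≤ 2 * L := by linarith
    calc 3 * C * L / y * (Real.log δ - (-2 * L)) ≤ 3 * C * L / y * (2 * L) :=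
        mul_le_mul_of_nonneg_left h4 (by positivity)
      _ = 6 * C * L ^ 2 / y := by ring
  -- assemble
  have hgoal : (∫ t in Ioc (0:ℝ) δ, g t * Complex.exp (Complex.I * y * t))
      = ∫ t in Ioc (0:ℝ) δ, g t * E t := rfl
  rw [hgoal, hsplit, heq]
  have htail : ‖g δ * h δ - g ε * h ε - ∫ t in Ioc ε δ, g' t * h t‖
      ≤ 9 * C * L ^ 2 / y + 9 * C * L ^ 2 / y + 6 * C * L ^ 2 / y := by
    refine le_trans (norm_sub_le _ _) ?_
    have := le_trans (norm_sub_le (g δ * h δ) (g ε * h ε))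
      (add_le_add (hbdry δ ⟨hεδ, le_refl δ⟩) (hbdry ε ⟨le_refl ε, hεδ⟩))
    linarith [htailint]
  refine le_trans (norm_add_le _ _) ?_
  have hhead2 : 64 * C / y ≤ 64 * C * L ^ 2 / y := by
    have h1 : 1 ≤ L ^ 2 := by nlinarith
    have h2 : 64 * C ≤ 64 * C * L ^ 2 := by
      nlinarith [mul_le_mul_of_nonneg_left h1 hC.le]
    exact (div_le_div_iff_of_pos_right hy0).mpr h2
  have : (100 * C) * L ^ 2 / y = 64 * C * L ^ 2 / y +
      (9 * C * L ^ 2 / y + 9 * C * L ^ 2 / y + 6 * C * L ^ 2 / y) + 12 * C * L ^ 2 / y := by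
    ring
  rw [this]
  have hnn : 0 ≤ 12 * C * L ^ 2 / y := by positivity
  linarith [hhead, htail, hhead2]
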